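/- arXiv:2507.04714 — 2 statements merged into one kernel-verified Lean document; each statement's English description precedes it below -/
import Mathlib

section
/- Every passive vertex of a tree with odd degrees is 0-stationary under majority dynamics, i.e., ξ_{t+2}(v) = ξ_t(v) for all t ≥ 0; here v is passive if strictly more than (deg_T(v)-1)/2 of its neighbours are leaves. -/
open SimpleGraph Set

variable {V : Type*}

/-- The majority-dynamics process generated by the initial opinion vector `σ`:
`ξ (t+1) v` is the sign of the sum of the opinions `ξ t` over the neighbours of `v`. -/
noncomputable def dyn (G : SimpleGraph V) (σ : V → ℤ) : ℕ → V → ℤ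
  | 0 => σ
  | t + 1 => fun v => if 0 < ∑ᶠ u ∈ G.neighborSet v, dyn G σ t u then 1 else -1

/-- `σ` is a valid vector of opinions, i.e. takes values in `{-1, 1}`. -/
def PM (σ : V → ℤ) : Prop := ∀ v, σ v = 1 ∨ σ v = -1

/-- The degree of a vertex. -/
noncomputable def degree' (G : SimpleGraph V) (v : V) : ℕ := (G.neighborSet v).ncard

/-- A leaf is a vertex of degree 1. -/
def IsLeaf (G : SimpleGraph V) (v : V) : Prop := degree' G v = 1

/-- The number of neighbours of `v` that are leaves. -/
noncomputable def leafNbrs (G : SimpleGraph V) (v : V) : ℕ := {u | G.Adj v u ∧ IsLeaf G u}.ncard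

/-- All degrees of `G` are odd. -/
def OddDegrees (G : SimpleGraph V) : Prop := ∀ v, Odd (degree' G v)

/-- `v` is `t`-stable for the process `ξ`. -/
def Stable (ξ : ℕ → V → ℤ) (v : V) (t : ℕ) : Prop :=
  ∀ s, t ≤ s → s % 2 = t % 2 → ξ (s + 2) v = ξ s v
lemma dyn_pm (G : SimpleGraph V) (σ : V → ℤ) (hσ : PM σ) :
    ∀ t u, dyn G σ t u = 1 ∨ dyn G σ t u = -1
  | 0, u => hσ u
  | t + 1, u => by unfold dyn; split <;> simp

lemma leaf_nbhd (G : SimpleGraph V) {u v : V} (hl : IsLeaf G u) (h : G.Adj v u) :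
    G.neighborSet u = {v} := by
  obtain ⟨a, ha⟩ := Set.ncard_eq_one.mp hl
  have hv : v ∈ G.neighborSet u := h.symm
  rw [ha] at hv ⊢
  simp_all

lemma leaf_step (G : SimpleGraph V) (σ : V → ℤ) (hσ : PM σ) {u v : V}
    (hl : IsLeaf G u) (h : G.Adj v u) (t : ℕ) :
    dyn G σ (t + 1) u = dyn G σ t v := by
  show (if 0 < ∑ᶠ w ∈ G.neighborSet u, dyn G σ t w then 1 else -1) = dyn G σ t v
  rw [leaf_nbhd G hl h, finsum_mem_singleton]
  rcases dyn_pm G σ hσ t v with h1 | h1 <;> rw [h1] <;> norm_num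

/-- Every passive vertex of a tree with odd degrees (strictly more than
`(deg v - 1)/2` of its neighbours are leaves) is 0-stationary: `ξ_{t+2}(v) = ξ_t(v)` for
every `t ≥ 0`. -/
theorem passive_stationary [Fintype V] (G : SimpleGraph V) (hT : G.IsTree)
    (hodd : OddDegrees G) (v : V)
    (hpassive : degree' G v - 1 < 2 * leafNbrs G v)
    (σ : V → ℤ) (hσ : PM σ) :
    ∀ t : ℕ, dyn G σ (t + 2) v = dyn G σ t v := by
  classical
  intro t
  have hfin : (G.neighborSet v).Finite := Set.toFinite _
  set N : Finset V := hfin.toFinset with hN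
  have hmemN : ∀ u, u ∈ N ↔ G.Adj v u := by
    intro u; rw [hN, Set.Finite.mem_toFinset]; rfl
  set P : V → Prop := fun u => IsLeaf G u with hP
  set L : Finset V := N.filter P with hL
  set R : Finset V := N.filter (fun u => ¬ P u) with hR
  -- the sum splits
  have hsplit : ∑ u ∈ N, dyn G σ (t + 1) u
      = (L.card : ℤ) * dyn G σ t v + ∑ u ∈ R, dyn G σ (t + 1) u := by
    rw [← Finset.sum_filter_add_sum_filter_not N P]
    congr 1
    rw [Finset.sum_congr rfl (fun u hu => ?_), Finset.sum_const, nsmul_eq_mul]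
    rw [Finset.mem_filter, hmemN] at hu
    exact leaf_step G σ hσ hu.2 hu.1 t
  -- cardinalities
  have hLcard : L.card = leafNbrs G v := by
    rw [leafNbrs, ← Set.ncard_coe_finset]
    congr 1
    ext u
    simp [hL, hP, hmemN u, and_comm]
  have hdeg : N.card = degree' G v := by
    rw [degree', ← Set.ncard_coe_finset, hN, Set.Finite.coe_toFinset]
  have hcards : L.card + R.card = N.card := by
    rw [hL, hR]; exact Finset.card_filter_add_card_filter_not _
  have hRL : R.card < L.card := by
    obtain ⟨k, hk⟩ := hodd v
    omega
  -- bound the rest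
  have hbound : |∑ u ∈ R, dyn G σ (t + 1) u| ≤ (R.card : ℤ) := by
    calc |∑ u ∈ R, dyn G σ (t + 1) u| ≤ ∑ u ∈ R, |dyn G σ (t + 1) u| :=
          Finset.abs_sum_le_sum_abs _ _
      _ ≤ (R.card : ℤ) := by
          have h1 : ∀ u ∈ R, |dyn G σ (t + 1) u| = 1 := fun u _ => by
            rcases dyn_pm G σ hσ (t + 1) u with h1 | h1 <;> rw [h1] <;> norm_num
          rw [Finset.sum_congr rfl h1, Finset.sum_const, nsmul_eq_mul, mul_one]
  have habs := abs_le.mp hbound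
  have hmain : dyn G σ (t + 2) v
      = if 0 < ∑ u ∈ N, dyn G σ (t + 1) u then 1 else -1 := by
    show (if 0 < ∑ᶠ u ∈ G.neighborSet v, dyn G σ (t + 1) u then (1:ℤ) else -1) = _
    rw [finsum_mem_eq_finite_toFinset_sum _ hfin]
  rw [hmain, hsplit]
  have hcast : (R.card : ℤ) < (L.card : ℤ) := by exact_mod_cast hRL
  rcases dyn_pm G σ hσ t v with h1 | h1 <;> rw [h1] <;>
    [rw [if_pos (by linarith)]; rw [if_neg (by push_neg; linarith)]]
end

section
/- Let T be a rooted perfect binary tree, u the parent of a vertex v ≠ root, and t ≥ 0. The following are equivalent: (1) v is weakly t-stable; (2) v is 0-stable for the initial vector that agrees with ξ_t on the subtree T_v and assigns opinion ξ_t(v) to all vertices outside T_v; (3) for every odd k > 0 and every process ξ̂ with ξ̂_0 agreeing with ξ_t on T_v and satisfying ξ̂_j(u) = ξ̂_0(v) for every odd j ≤ k, one has ξ̂_{k+1}(v) = ξ̂_0(v). -/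
open SimpleGraph Set

variable {V : Type*}

/-- `G` is a perfect `k`-ary tree of height `h` rooted at `R`. -/
noncomputable def IsPerfectKAry (G : SimpleGraph V) (R : V) (k h : ℕ) : Prop :=
  G.IsTree ∧ (∀ v, degree' G v = 1 ∨ degree' G v = k + 1) ∧
    (∀ v, degree' G v = 1 → G.dist R v = h) ∧ degree' G R = k + 1

/-- The set of descendants of `v` (including `v`) in the tree rooted at `R`:
those vertices `u` such that `v` lies on the (unique) geodesic from `R` to `u`. -/
noncomputable def desc (G : SimpleGraph V) (R v : V) : Set V :=
  {u | G.dist R u = G.dist R v + G.dist v u}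

/-- `p` is the parent of `c` in the tree rooted at `R`. -/
noncomputable def IsParent (G : SimpleGraph V) (R p c : V) : Prop :=
  G.Adj p c ∧ G.dist R p + 1 = G.dist R c

/-- `v` is weakly `t`-stable for the process `ξ` (in the tree rooted at `R`): there is a
vector of initial opinions agreeing with `ξ t` on the subtree of descendants of `v` for
which `v` is 0-stable. -/
noncomputable def WeaklyStable (G : SimpleGraph V) (R : V) (ξ : ℕ → V → ℤ) (v : V)
    (t : ℕ) : Prop :=
  ∃ σ' : V → ℤ, PM σ' ∧ (∀ w ∈ desc G R v, σ' w = ξ t w) ∧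
    ∀ s, s % 2 = 0 → dyn G σ' (s + 2) v = dyn G σ' s v

section Aux
open scoped Classical

lemma dyn_succ [Fintype V] (G : SimpleGraph V) (σ : V → ℤ) (s : ℕ) (w : V) :
    dyn G σ (s+1) w =
      if 0 < ∑ x ∈ (G.neighborSet w).toFinset, dyn G σ s x then 1 else -1 := by
  simp only [dyn, finsum_mem_eq_toFinset_sum]

lemma pm_dyn [Fintype V] {G : SimpleGraph V} {σ : V → ℤ} (hσ : PM σ) (t : ℕ) :
    PM (dyn G σ t) := by
  cases t with
  | zero => exact hσ
  | succ t => intro v; rw [dyn_succ]; split <;> simp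

lemma dyn_mono [Fintype V] (G : SimpleGraph V) {σ τ : V → ℤ} (hst : ∀ w, σ w ≤ τ w) :
    ∀ s w, dyn G σ s w ≤ dyn G τ s w := by
  intro s
  induction s with
  | zero => exact hst
  | succ s ih =>
    intro w
    rw [dyn_succ, dyn_succ]
    have hsum : ∑ x ∈ (G.neighborSet w).toFinset, dyn G σ s x
        ≤ ∑ x ∈ (G.neighborSet w).toFinset, dyn G τ s x :=
      Finset.sum_le_sum fun x _ => ih x
    split_ifs with h1 h2
    · exact le_refl _
    · exact absurd (lt_of_lt_of_le h1 hsum) h2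
    · norm_num
    · exact le_refl _

lemma path_length_eq_dist {G : SimpleGraph V} (hG : G.IsTree) {a b : V}
    (p : G.Walk a b) (hp : p.IsPath) : p.length = G.dist a b := by
  obtain ⟨q, hq⟩ := (hG.isConnected a b).exists_walk_length_eq_dist
  have hpq : (⟨p, hp⟩ : G.Path a b) = ⟨q.bypass, q.bypass_isPath⟩ :=
    hG.IsAcyclic.path_unique _ _
  have h1 : p.length = q.bypass.length := by
    simpa using congrArg (fun r : G.Path a b => (r : G.Walk a b).length) hpq
  have h2 := q.length_bypass_le
  have h3 := SimpleGraph.dist_le p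
  omega

lemma dist_le_of_mem_support {G : SimpleGraph V} {a b y : V} (p : G.Walk a b)
    (hy : y ∈ p.support) : G.dist a y ≤ p.length := by
  have h1 := SimpleGraph.dist_le (p.takeUntil y hy)
  have h2 := p.length_takeUntil_le hy
  omega

lemma dist_getVert_le {G : SimpleGraph V} (hc : G.Connected) {a b : V} (p : G.Walk a b)
    (i : ℕ) : G.dist a (p.getVert i) ≤ i := by
  induction p generalizing i with
  | nil => simp [SimpleGraph.Walk.getVert, SimpleGraph.dist_self]
  | @cons a x b h q ih =>
    cases i with
    | zero => simp [SimpleGraph.dist_self]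
    | succ i =>
      rw [SimpleGraph.Walk.getVert_cons_succ]
      have h1 := hc.dist_triangle (u := a) (v := x) (w := q.getVert i)
      have h2 : G.dist a x ≤ 1 := by
        simpa using SimpleGraph.dist_le (SimpleGraph.Walk.cons h SimpleGraph.Walk.nil)
      have h3 := ih i
      omega

lemma isPath_concat {G : SimpleGraph V} {a b c : V} {p : G.Walk a b} (hp : p.IsPath)
    (h : G.Adj b c) (hc : c ∉ p.support) : (p.concat h).IsPath := by
  rw [SimpleGraph.Walk.isPath_def, SimpleGraph.Walk.support_concat,
    List.nodup_append']
  refine ⟨hp.support_nodup, List.nodup_singleton c, ?_⟩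
  intro y hy hy'
  simp only [List.mem_singleton] at hy'
  exact hc (hy' ▸ hy)

lemma adj_dist_ne {G : SimpleGraph V} (hG : G.IsTree) {b a x : V} (hax : G.Adj a x) :
    G.dist b a ≠ G.dist b x := by
  intro heq
  obtain ⟨p, hp, -⟩ := hG.existsUnique_path b a
  obtain ⟨q, hq, hquniq⟩ := hG.existsUnique_path b x
  have hpl : p.length = G.dist b a := path_length_eq_dist hG p hp
  have hql : q.length = G.dist b x := path_length_eq_dist hG q hq
  by_cases hx : x ∈ p.support
  · have h1 : p.takeUntil x hx = q := hquniq _ (hp.takeUntil hx)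
    have h2 := congrArg SimpleGraph.Walk.length (p.take_spec hx)
    rw [SimpleGraph.Walk.length_append, h1] at h2
    have h3 : (p.dropUntil x hx).length = 0 := by omega
    have h4 : x = a := SimpleGraph.Walk.eq_of_length_eq_zero h3
    exact G.loopless.irrefl a (h4 ▸ hax)
  · have h1 : p.concat hax = q := hquniq _ (isPath_concat hp hax hx)
    have h2 := congrArg SimpleGraph.Walk.length h1
    rw [SimpleGraph.Walk.length_concat] at h2
    omega

lemma walk_length_parity {G : SimpleGraph V} (hG : G.IsTree) {a b : V} (p : G.Walk a b) :
    p.length % 2 = G.dist a b % 2 := by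
  induction p with
  | nil => simp [SimpleGraph.dist_self]
  | @cons a x b h q ih =>
    have h1 : G.dist b a ≠ G.dist b x := adj_dist_ne hG h
    have h2 : G.dist b a ≤ G.dist b x + 1 := by
      have := hG.isConnected.dist_triangle (u := b) (v := x) (w := a)
      have hax : G.dist x a ≤ 1 := by
        simpa using SimpleGraph.dist_le (SimpleGraph.Walk.cons h.symm SimpleGraph.Walk.nil)
      omega
    have h3 : G.dist b x ≤ G.dist b a + 1 := by
      have := hG.isConnected.dist_triangle (u := b) (v := a) (w := x)
      have hax : G.dist a x ≤ 1 := by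
        simpa using SimpleGraph.dist_le (SimpleGraph.Walk.cons h SimpleGraph.Walk.nil)
      omega
    have h4 : G.dist a b = G.dist b a := SimpleGraph.dist_comm ..
    have h5 : G.dist x b = G.dist b x := SimpleGraph.dist_comm ..
    rw [SimpleGraph.Walk.length_cons]
    omega

lemma parent_unique {G : SimpleGraph V} (hG : G.IsTree) {R x w1 w2 : V}
    (h1 : G.Adj w1 x) (h2 : G.Adj w2 x)
    (d1 : G.dist R w1 + 1 = G.dist R x) (d2 : G.dist R w2 + 1 = G.dist R x) : w1 = w2 := by
  obtain ⟨p1, hp1, -⟩ := hG.existsUnique_path R w1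
  obtain ⟨p2, hp2, -⟩ := hG.existsUnique_path R w2
  have l1 : p1.length = G.dist R w1 := path_length_eq_dist hG p1 hp1
  have l2 : p2.length = G.dist R w2 := path_length_eq_dist hG p2 hp2
  have hx1 : x ∉ p1.support := fun hx => by
    have := dist_le_of_mem_support p1 hx; omega
  have hx2 : x ∉ p2.support := fun hx => by
    have := dist_le_of_mem_support p2 hx; omega
  obtain ⟨q, -, hquniq⟩ := hG.existsUnique_path R x
  have e1 : p1.concat h1 = q := hquniq _ (isPath_concat hp1 h1 hx1)
  have e2 : p2.concat h2 = q := hquniq _ (isPath_concat hp2 h2 hx2)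
  have e3 : p1.concat h1 = p2.concat h2 := e1.trans e2.symm
  have e4 := congrArg (fun r : G.Walk R x => r.reverse.getVert 1) e3
  simpa [SimpleGraph.Walk.reverse_concat, SimpleGraph.Walk.getVert_cons, SimpleGraph.Walk.getVert_zero] using e4

lemma mem_desc_self (G : SimpleGraph V) (R v : V) : v ∈ desc G R v := by
  simp [desc, SimpleGraph.dist_self]

lemma parent_not_mem_desc {G : SimpleGraph V} {R v u : V} (hu : IsParent G R u v) :
    u ∉ desc G R v := by
  intro hmem
  have h1 : G.dist R u = G.dist R v + G.dist v u := hmem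
  have h2 := hu.2
  omega

lemma desc_boundary {G : SimpleGraph V} (hG : G.IsTree) {R v u : V}
    (hu : IsParent G R u v) {x w : V} (hx : x ∈ desc G R v) (hw : w ∉ desc G R v)
    (hadj : G.Adj x w) : x = v ∧ w = u := by
  have hconn := hG.isConnected
  have hxd : G.dist R x = G.dist R v + G.dist v x := hx
  have hne : G.dist R x ≠ G.dist R w := adj_dist_ne hG hadj
  have hd1 : G.dist R w ≤ G.dist R x + 1 := by
    have h1 : G.dist x w ≤ 1 := by
      simpa using SimpleGraph.dist_le (SimpleGraph.Walk.cons hadj SimpleGraph.Walk.nil)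
    have := hconn.dist_triangle (u := R) (v := x) (w := w)
    omega
  have hd2 : G.dist R x ≤ G.dist R w + 1 := by
    have h1 : G.dist w x ≤ 1 := by
      simpa using SimpleGraph.dist_le (SimpleGraph.Walk.cons hadj.symm SimpleGraph.Walk.nil)
    have := hconn.dist_triangle (u := R) (v := w) (w := x)
    omega
  have hvw1 : G.dist v w ≤ G.dist v x + 1 := by
    have h1 : G.dist x w ≤ 1 := by
      simpa using SimpleGraph.dist_le (SimpleGraph.Walk.cons hadj SimpleGraph.Walk.nil)
    have := hconn.dist_triangle (u := v) (v := x) (w := w)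
    omega
  rcases (by omega : G.dist R w = G.dist R x + 1 ∨ G.dist R w + 1 = G.dist R x) with hcase | hcase
  · exfalso
    apply hw
    have ht : G.dist R w ≤ G.dist R v + G.dist v w := hconn.dist_triangle
    show G.dist R w = G.dist R v + G.dist v w
    omega
  · by_cases hd0 : G.dist v x = 0
    · have hxv : x = v :=
        ((hconn.dist_eq_zero_iff (u := v) (v := x)).mp hd0).symm
      subst hxv
      refine ⟨rfl, ?_⟩
      exact parent_unique hG hadj.symm hu.1 (by omega) hu.2
    · exfalso
      obtain ⟨P, hP, -⟩ := hG.existsUnique_path v x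
      have hPl : P.length = G.dist v x := path_length_eq_dist hG P hP
      set d := G.dist v x with hdd
      set y := P.getVert (d - 1) with hy
      have hyadj : G.Adj y x := by
        have := P.adj_getVert_succ (i := d - 1) (by omega)
        rw [show d - 1 + 1 = P.length by omega] at this
        rw [SimpleGraph.Walk.getVert_length] at this
        exact this
      have hyd : G.dist v y ≤ d - 1 := by
        have h2 := dist_getVert_le hconn P (d - 1)
        rw [← hy] at h2
        exact h2
      have hyRd1 : G.dist R x ≤ G.dist R y + 1 := by
        have h1 : G.dist y x ≤ 1 := by
          simpa using SimpleGraph.dist_le (SimpleGraph.Walk.cons hyadj SimpleGraph.Walk.nil)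
        have := hconn.dist_triangle (u := R) (v := y) (w := x)
        omega
      have hyRd2 : G.dist R y ≤ G.dist R v + G.dist v y := hconn.dist_triangle
      have hyR : G.dist R y + 1 = G.dist R x := by omega
      have hwy : w = y := parent_unique hG hadj.symm hyadj (by omega) hyR
      apply hw
      show G.dist R w = G.dist R v + G.dist v w
      rw [hwy]
      have hvy : G.dist v y = d - 1 := by omega
      omega

lemma degree_parent_eq_three {G : SimpleGraph V} (hG : G.IsTree) {R v u : V}
    (hu : IsParent G R u v) (hdeg : ∀ w, degree' G w = 1 ∨ degree' G w = 3)
    (hR : degree' G R = 3) : degree' G u = 3 := by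
  rcases hdeg u with h1 | h3
  · exfalso
    have huR : u ≠ R := by
      intro h; rw [h, hR] at h1; omega
    have hpos : 0 < G.dist R u := hG.isConnected.pos_dist_of_ne (Ne.symm huR)
    obtain ⟨P, hP, -⟩ := hG.existsUnique_path R u
    have hPl : P.length = G.dist R u := path_length_eq_dist hG P hP
    set y := P.getVert (G.dist R u - 1) with hy
    have hyadj : G.Adj y u := by
      have := P.adj_getVert_succ (i := G.dist R u - 1) (by omega)
      rw [show G.dist R u - 1 + 1 = P.length by omega] at this
      rw [SimpleGraph.Walk.getVert_length] at this
      exact this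
    have hyd : G.dist R y ≤ G.dist R u - 1 := by
      have h2 := dist_getVert_le hG.isConnected P (G.dist R u - 1)
      rw [← hy] at h2
      exact h2
    -- N(u) has exactly one element, and v ∈ N(u)
    obtain ⟨a, ha⟩ := Set.ncard_eq_one.mp h1
    have hva : v = a := by
      have : v ∈ G.neighborSet u := hu.1
      rw [ha] at this; exact this
    have hya : y = a := by
      have : y ∈ G.neighborSet u := hyadj.symm
      rw [ha] at this; exact this
    have hyv : y = v := by rw [hya, hva]
    rw [hyv] at hyd
    have := hu.2
    omega
  · exact h3

lemma stable_all_even [Fintype V] {G : SimpleGraph V} {τ : V → ℤ} {v : V}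
    (hst : ∀ s, s % 2 = 0 → dyn G τ (s + 2) v = dyn G τ s v) :
    ∀ s, s % 2 = 0 → dyn G τ s v = τ v := by
  have key : ∀ m, dyn G τ (2 * m) v = τ v := by
    intro m
    induction m with
    | zero => rfl
    | succ m ih =>
      have h1 : 2 * (m + 1) = 2 * m + 2 := by omega
      rw [h1, hst (2 * m) (by omega), ih]
  intro s hs
  obtain ⟨m, rfl⟩ : ∃ m, s = 2 * m := ⟨s / 2, by omega⟩
  exact key m

lemma outside_const [Fintype V] {G : SimpleGraph V} {R v u : V} (hG : G.IsTree)
    (hdeg : ∀ w, degree' G w = 1 ∨ degree' G w = 3) (hdegu : degree' G u = 3)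
    (hu : IsParent G R u v)
    {c : ℤ} (hc : c = 1 ∨ c = -1) {τ : V → ℤ} (hτ : PM τ)
    (hτout : ∀ w, w ∉ desc G R v → τ w = c) :
    ∀ j w, w ∉ desc G R v → dyn G τ j w = c := by
  intro j
  induction j with
  | zero => exact hτout
  | succ j ih =>
    intro w hw
    rw [dyn_succ]
    have hcard : (G.neighborSet w).toFinset.card = degree' G w := by
      rw [degree', Set.ncard_eq_toFinset_card']
    by_cases hwu : w = u
    · -- neighbours: v plus two vertices outside desc
      have hu' : IsParent G R w v := by rw [hwu]; exact hu
      have hdegu' : degree' G w = 3 := by rw [hwu]; exact hdegu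
      have hvmem : v ∈ (G.neighborSet w).toFinset := by
        simp only [Set.mem_toFinset]; exact hu'.1
      have hsum : ∑ x ∈ (G.neighborSet w).toFinset, dyn G τ j x
          = dyn G τ j v + ∑ x ∈ (G.neighborSet w).toFinset.erase v, dyn G τ j x := by
        rw [← Finset.add_sum_erase _ _ hvmem]
      have hrest : ∑ x ∈ (G.neighborSet w).toFinset.erase v, dyn G τ j x
          = ((G.neighborSet w).toFinset.erase v).card • c := by
        rw [← Finset.sum_const]
        apply Finset.sum_congr rfl
        intro x hxmem
        have hxv : x ≠ v := Finset.ne_of_mem_erase hxmem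
        have hxadj : G.Adj w x := by
          have := Finset.mem_of_mem_erase hxmem
          simpa using this
        have hxnot : x ∉ desc G R v := by
          intro hxdesc
          exact hxv (desc_boundary hG hu' hxdesc (parent_not_mem_desc hu') hxadj.symm).1
        exact ih x hxnot
      have hcard2 : ((G.neighborSet w).toFinset.erase v).card = 2 := by
        rw [Finset.card_erase_of_mem hvmem, hcard, hdegu']
      rcases pm_dyn (G := G) hτ j v with hv1 | hv1 <;> rcases hc with hc1 | hc1 <;>
        rw [hsum, hrest, hcard2, hv1, hc1] <;> norm_num
    · -- all neighbours outside desc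
      have hall : ∀ x ∈ (G.neighborSet w).toFinset, dyn G τ j x = c := by
        intro x hxmem
        have hxadj : G.Adj w x := by simpa using hxmem
        have hxnot : x ∉ desc G R v := by
          intro hxdesc
          exact hwu (desc_boundary hG hu hxdesc hw hxadj.symm).2
        exact ih x hxnot
      rw [Finset.sum_congr rfl hall, Finset.sum_const, hcard]
      have hd1 : 1 ≤ degree' G w := by rcases hdeg w with h | h <;> omega
      have hdcast : (1:ℤ) ≤ (degree' G w : ℤ) := by exact_mod_cast hd1
      rcases hc with hc1 | hc1 <;> subst hc1
      · have hpos : (0:ℤ) < (degree' G w) • (1:ℤ) := by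
          simp only [nsmul_eq_mul, mul_one]; omega
        rw [if_pos hpos]
      · have hneg : ¬ (0:ℤ) < (degree' G w) • (-1:ℤ) := by
          simp only [nsmul_eq_mul, mul_neg_one]; omega
        rw [if_neg hneg]

lemma dyn_compare [Fintype V] {G : SimpleGraph V} (hG : G.IsTree) {R v u : V}
    (hu : IsParent G R u v) {σ₁ σ₂ : V → ℤ}
    (hagree : ∀ w ∈ desc G R v, σ₁ w = σ₂ w) (k : ℕ)
    (hpar : ∀ j, j % 2 = 1 → j ≤ k → dyn G σ₁ j u = dyn G σ₂ j u) :
    ∀ s, s ≤ k + 1 → ∀ w ∈ desc G R v, (s + G.dist v w) % 2 = 0 →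
      dyn G σ₁ s w = dyn G σ₂ s w := by
  intro s
  induction s with
  | zero => exact fun _ w hw _ => hagree w hw
  | succ s ih =>
    intro hs w hw hpar2
    rw [dyn_succ, dyn_succ]
    have hsum : ∑ x ∈ (G.neighborSet w).toFinset, dyn G σ₁ s x
        = ∑ x ∈ (G.neighborSet w).toFinset, dyn G σ₂ s x := by
      apply Finset.sum_congr rfl
      intro x hxmem
      have hxadj : G.Adj w x := by simpa using hxmem
      by_cases hxdesc : x ∈ desc G R v
      · apply ih (by omega) x hxdesc
        have h1 : G.dist v w ≠ G.dist v x := adj_dist_ne hG hxadj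
        have h2 : G.dist v x ≤ G.dist v w + 1 := by
          have ha : G.dist w x ≤ 1 := by
            simpa using SimpleGraph.dist_le (SimpleGraph.Walk.cons hxadj SimpleGraph.Walk.nil)
          have := hG.isConnected.dist_triangle (u := v) (v := w) (w := x)
          omega
        have h3 : G.dist v w ≤ G.dist v x + 1 := by
          have ha : G.dist x w ≤ 1 := by
            simpa using
              SimpleGraph.dist_le (SimpleGraph.Walk.cons hxadj.symm SimpleGraph.Walk.nil)
          have := hG.isConnected.dist_triangle (u := v) (v := x) (w := w)
          omega
        omega
      · obtain ⟨hwv, hxu⟩ := desc_boundary hG hu hw hxdesc hxadj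
        subst hwv
        subst hxu
        rw [SimpleGraph.dist_self] at hpar2
        exact hpar s (by omega) (by omega)
    rw [hsum]

end Aux

open scoped Classical in
/-- Equivalent characterisations of weak `t`-stability of a non-root vertex
`v` with parent `u` of a perfect binary tree: (1) the definition; (2) `v` is 0-stable for
the particular initial vector agreeing with `ξ_t` on `T_v` and equal to `ξ_t(v)` outside;
(3) for every odd `k > 0` and every process starting from a vector agreeing with `ξ_t` on
`T_v` in which the parent `u` has opinion `ξ̂_0(v)` at all odd times `j ≤ k`, one has
`ξ̂_{k+1}(v) = ξ̂_0(v)`. -/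
theorem weaklyStable_equiv [Fintype V] (G : SimpleGraph V) (R : V) (h : ℕ) (hh : 1 ≤ h)
    (hperf : IsPerfectKAry G R 2 h) (v u : V) (hv : v ≠ R) (hu : IsParent G R u v)
    (σ : V → ℤ) (hσ : PM σ) (t : ℕ) :
    (WeaklyStable G R (dyn G σ) v t ↔
      (∀ s, s % 2 = 0 →
        dyn G (fun w => if w ∈ desc G R v then dyn G σ t w else dyn G σ t v) (s + 2) v =
        dyn G (fun w => if w ∈ desc G R v then dyn G σ t w else dyn G σ t v) s v)) ∧
    (WeaklyStable G R (dyn G σ) v t ↔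
      (∀ k : ℕ, Odd k → ∀ σ' : V → ℤ, PM σ' →
        (∀ w ∈ desc G R v, σ' w = dyn G σ t w) →
        (∀ j, Odd j → j ≤ k → dyn G σ' j u = σ' v) →
        dyn G σ' (k + 1) v = σ' v)) := by
  classical
  obtain ⟨hT, hdeg0, hleaf, hR0⟩ := hperf
  have hdeg : ∀ w, degree' G w = 1 ∨ degree' G w = 3 := by
    intro w; rcases hdeg0 w with h1 | h1
    · exact Or.inl h1
    · exact Or.inr (by omega)
  have hR : degree' G R = 3 := by omega
  set σ'' : V → ℤ := fun w => if w ∈ desc G R v then dyn G σ t w else dyn G σ t v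
    with hσ''
  have hmemv : v ∈ desc G R v := mem_desc_self G R v
  have hunotdesc : u ∉ desc G R v := parent_not_mem_desc hu
  have hc : dyn G σ t v = 1 ∨ dyn G σ t v = -1 := pm_dyn hσ t v
  have hPM'' : PM σ'' := by
    intro w
    simp only [hσ'']
    split
    · exact pm_dyn hσ t w
    · exact pm_dyn hσ t v
  have hagree'' : ∀ w ∈ desc G R v, σ'' w = dyn G σ t w := by
    intro w hw; simp [hσ'', hw]
  have hA : ∀ j w, w ∉ desc G R v → dyn G σ'' j w = dyn G σ t v :=
    outside_const hT hdeg (degree_parent_eq_three hT hu hdeg hR) hu hc hPM''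
      (fun w hw => by simp [hσ'', hw])
  have himp12 : WeaklyStable G R (dyn G σ) v t →
      ∀ s, s % 2 = 0 → dyn G σ'' (s + 2) v = dyn G σ'' s v := by
    rintro ⟨σ₁, hpm1, hag1, hst1⟩ s hs
    have hx : ∀ s', s' % 2 = 0 → dyn G σ₁ s' v = σ₁ v := stable_all_even hst1
    have hσ1v : σ₁ v = dyn G σ t v := hag1 v hmemv
    rcases hc with hc1 | hc1
    · have hle : ∀ w, σ₁ w ≤ σ'' w := by
        intro w
        by_cases hw : w ∈ desc G R v
        · rw [hag1 w hw]; simp [hσ'', hw]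
        · have hw1 : σ'' w = 1 := by simp [hσ'', hw, hc1]
          rw [hw1]; rcases hpm1 w with h1 | h1 <;> omega
      have hev : ∀ s', s' % 2 = 0 → dyn G σ'' s' v = 1 := by
        intro s' hs'
        have h1 := dyn_mono G hle s' v
        rw [hx s' hs', hσ1v, hc1] at h1
        rcases pm_dyn (G := G) hPM'' s' v with h2 | h2
        · exact h2
        · omega
      rw [hev (s + 2) (by omega), hev s hs]
    · have hle : ∀ w, σ'' w ≤ σ₁ w := by
        intro w
        by_cases hw : w ∈ desc G R v
        · rw [hag1 w hw]; simp [hσ'', hw]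
        · have hw1 : σ'' w = -1 := by simp [hσ'', hw, hc1]
          rw [hw1]; rcases hpm1 w with h1 | h1 <;> omega
      have hev : ∀ s', s' % 2 = 0 → dyn G σ'' s' v = -1 := by
        intro s' hs'
        have h1 := dyn_mono G hle s' v
        rw [hx s' hs', hσ1v, hc1] at h1
        rcases pm_dyn (G := G) hPM'' s' v with h2 | h2
        · omega
        · exact h2
      rw [hev (s + 2) (by omega), hev s hs]
  have himp23 : (∀ s, s % 2 = 0 → dyn G σ'' (s + 2) v = dyn G σ'' s v) →
      ∀ k : ℕ, Odd k → ∀ σ' : V → ℤ, PM σ' →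
        (∀ w ∈ desc G R v, σ' w = dyn G σ t w) →
        (∀ j, Odd j → j ≤ k → dyn G σ' j u = σ' v) →
        dyn G σ' (k + 1) v = σ' v := by
    intro hst k hk σ' hpm' hag' hpar'
    have hk1 : k % 2 = 1 := Nat.odd_iff.mp hk
    have hσ'v : σ' v = dyn G σ t v := hag' v hmemv
    have hagree : ∀ w ∈ desc G R v, σ' w = σ'' w := by
      intro w hw; rw [hag' w hw, hagree'' w hw]
    have hparu : ∀ j, j % 2 = 1 → j ≤ k → dyn G σ' j u = dyn G σ'' j u := by
      intro j hj hjk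
      rw [hpar' j (Nat.odd_iff.mpr hj) hjk, hA j u hunotdesc, hσ'v]
    have hcmp := dyn_compare hT hu hagree k hparu (k + 1) le_rfl v hmemv
      (by rw [SimpleGraph.dist_self]; omega)
    have hst'' : dyn G σ'' (k + 1) v = σ'' v := stable_all_even hst (k + 1) (by omega)
    rw [hcmp, hst'', hagree'' v hmemv, hσ'v]
  have himp31 : (∀ k : ℕ, Odd k → ∀ σ' : V → ℤ, PM σ' →
        (∀ w ∈ desc G R v, σ' w = dyn G σ t w) →
        (∀ j, Odd j → j ≤ k → dyn G σ' j u = σ' v) →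
        dyn G σ' (k + 1) v = σ' v) →
      WeaklyStable G R (dyn G σ) v t := by
    intro h3
    refine ⟨σ'', hPM'', hagree'', ?_⟩
    intro s hs
    have happ : ∀ k, k % 2 = 1 → dyn G σ'' (k + 1) v = σ'' v := by
      intro k hk
      apply h3 k (Nat.odd_iff.mpr hk) σ'' hPM'' hagree''
      intro j hj hjk
      rw [hA j u hunotdesc, hagree'' v hmemv]
    rcases Nat.eq_zero_or_pos s with rfl | hpos
    · have h1 := happ 1 (by norm_num)
      have h0 : dyn G σ'' 0 v = σ'' v := rfl
      rw [show 0 + 2 = 1 + 1 by norm_num, h1, h0]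
    · have h1 := happ (s + 1) (by omega)
      have h2 := happ (s - 1) (by omega)
      rw [show s - 1 + 1 = s by omega] at h2
      rw [show s + 1 + 1 = s + 2 by omega] at h1
      rw [h1, h2]
  exact ⟨⟨himp12, fun h2 => ⟨σ'', hPM'', hagree'', h2⟩⟩,
    ⟨fun h1 => himp23 (himp12 h1), himp31⟩⟩
end
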